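/- (Proposition 1, lower bound) Suppose X^n ⊂ ℝ^d (d ≥ 2) is in general position. Then the finite sample additional breakdown point of Tukey's halfspace median satisfies ε(T*, X^n) ≥ ⌈n/d⌉ / (n + ⌈n/d⌉). -/

import Mathlib

open scoped RealInnerProductSpace
open MeasureTheory

noncomputable section

/-- `E d` is the Euclidean space `ℝ^d`. -/
abbrev E (d : ℕ) : Type := EuclideanSpace ℝ (Fin d)

/-- A sample `X` of `n` points in `ℝ^d` is in general position if no affine hyperplane
(encoded as `{x | ⟪v, x⟫ = c}` for some `v ≠ 0`) contains more than `d` of the points. -/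
def inGeneralPosition {d n : ℕ} (X : Fin n → E d) : Prop :=
  ∀ v : E d, v ≠ 0 → ∀ c : ℝ, ({i : Fin n | ⟪v, X i⟫ = c} : Set (Fin n)).ncard ≤ d

/-- Number of sample points in the closed halfspace `{z | ⟪u, z⟫ ≤ ⟪u, x⟫}`. -/
def sideCount {d n : ℕ} (X : Fin n → E d) (u x : E d) : ℕ :=
  ({i : Fin n | ⟪u, X i⟫ ≤ ⟪u, x⟫} : Set (Fin n)).ncard

/-- Tukey's halfspace depth of `x` with respect to the sample `X`. -/
def depth {d n : ℕ} (X : Fin n → E d) (x : E d) : ℝ :=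
  sInf {r : ℝ | ∃ u : E d, ‖u‖ = 1 ∧ r = (sideCount X u x : ℝ) / (n : ℝ)}

/-- The maximum Tukey depth `λ*` of the sample `X`. -/
def maxDepth {d n : ℕ} (X : Fin n → E d) : ℝ :=
  sSup (Set.range (depth X))

/-- The set `M(X)` of deepest points. -/
def MSet {d n : ℕ} (X : Fin n → E d) : Set (E d) :=
  {x | depth X x = maxDepth X}

/-- `U_x`: the set of optimal (unit) directions realizing the depth at `x`. -/
def USet {d n : ℕ} (X : Fin n → E d) (x : E d) : Set (E d) :=
  {u | ‖u‖ = 1 ∧ (sideCount X u x : ℝ) / (n : ℝ) = depth X x}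

/-- `H_{x,y}`: the open hemisphere of unit directions `u` with `⟪u, x⟫ < ⟪u, y⟫`. -/
def HSet {d : ℕ} (x y : E d) : Set (E d) :=
  {u | ‖u‖ = 1 ∧ ⟪u, x⟫ < ⟪u, y⟫}

/-- `B_z`. -/
def BSet {d n : ℕ} (X : Fin n → E d) (z : E d) : Set (E d) :=
  {x | x ∈ MSet X ∧ USet X x ∩ HSet x z = ∅}

/-- `B̃_z = B_z \ {z}`. -/
def BTilde {d n : ℕ} (X : Fin n → E d) (z : E d) : Set (E d) :=
  BSet X z \ {z}

/-- `v` is a unit vector normal to an affine hyperplane spanned by `d` of the sample points. -/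
def normalToSampleHyperplane {d n : ℕ} (X : Fin n → E d) (v : E d) : Prop :=
  ‖v‖ = 1 ∧ ∃ (s : Finset (Fin n)) (c : ℝ), s.card = d ∧
    (affineSpan ℝ (X '' (s : Set (Fin n))) : Set (E d)) = {x : E d | ⟪v, x⟫ = c}

/-- Condition (2.1) on a unit direction `u`. -/
def cond21 {d n : ℕ} (X : Fin n → E d) (u : E d) : Prop :=
  ∀ v : E d, normalToSampleHyperplane X v → ⟪u, v⟫ ≠ 0

/-- `A` represents the columns of a `d × (d-1)` matrix which together with the unit
vector `u` form an orthonormal basis of `ℝ^d`. -/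
def IsAu {d : ℕ} (u : E d) (A : Fin (d - 1) → E d) : Prop :=
  ‖u‖ = 1 ∧ Orthonormal ℝ A ∧ ∀ j, ⟪A j, u⟫ = 0

/-- The `A_u`-projection `A_u^T x ∈ ℝ^{d-1}` of a point `x ∈ ℝ^d`. -/
def proj {d : ℕ} (A : Fin (d - 1) → E d) (x : E d) : E (d - 1) :=
  (WithLp.equiv 2 (Fin (d - 1) → ℝ)).symm (fun j => ⟪A j, x⟫)

/-- The embedding `A_u x = ∑ j x_j A_j ∈ ℝ^d` of a point `x ∈ ℝ^{d-1}`. -/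
def embed {d : ℕ} (A : Fin (d - 1) → E d) (x : E (d - 1)) : E d :=
  ∑ j, x j • A j

/-- `λ₀ = inf_{u ∈ S^{d-1}} λ*(X_u^n)`, the infimum over all directions of the maximum
Tukey depth of the projected sample. -/
def lambda0 {d n : ℕ} (X : Fin n → E d) : ℝ :=
  sInf {r : ℝ | ∃ (u : E d) (A : Fin (d - 1) → E d),
    IsAu u A ∧ r = maxDepth (fun i => proj A (X i))}

/-- The average (barycenter) of a set `K ⊆ ℝ^d`, taken with respect to the Hausdorff
measure of dimension equal to the affine dimension of `K`. -/
def setAverage {d : ℕ} (K : Set (E d)) : E d :=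
  (μH[(Module.finrank ℝ (affineSpan ℝ K).direction : ℝ)] K).toReal⁻¹ •
    ∫ x in K, x ∂(μH[(Module.finrank ℝ (affineSpan ℝ K).direction : ℝ)])

/-- Tukey's halfspace median: the average of all deepest points. -/
def TukeyMedian {d n : ℕ} (X : Fin n → E d) : E d :=
  setAverage (MSet X)

/-- `m` contaminating points suffice to break down the Tukey median at `X`. -/
def breaksDown {d n : ℕ} (X : Fin n → E d) (m : ℕ) : Prop :=
  ∀ C : ℝ, ∃ Y : Fin m → E d, C < ‖TukeyMedian (Fin.append X Y) - TukeyMedian X‖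

/-- The finite sample (additional) breakdown point of the Tukey median at `X`. -/
def FSBP {d n : ℕ} (X : Fin n → E d) : ℝ :=
  sInf {r : ℝ | ∃ m : ℕ, 1 ≤ m ∧ breaksDown X m ∧ r = (m : ℝ) / ((n : ℝ) + (m : ℝ))}

section Aux

open Module Finset

variable {d n : ℕ}

/-- The set of achievable depth ratios at `x`. -/
def depthSet {d n : ℕ} (X : Fin n → E d) (x : E d) : Set ℝ :=
  {r : ℝ | ∃ u : E d, ‖u‖ = 1 ∧ r = (sideCount X u x : ℝ) / (n : ℝ)}

lemma depth_eq_sInf (X : Fin n → E d) (x : E d) : depth X x = sInf (depthSet X x) := rfl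

lemma exists_unit (hd : 1 ≤ d) : ∃ u : E d, ‖u‖ = 1 := by
  refine ⟨EuclideanSpace.single ⟨0, hd⟩ 1, ?_⟩
  rw [EuclideanSpace.norm_single]; norm_num

lemma depthSet_nonneg {X : Fin n → E d} {x : E d} {r : ℝ} (hr : r ∈ depthSet X x) : 0 ≤ r := by
  obtain ⟨u, hu, rfl⟩ := hr
  positivity

lemma depthSet_bddBelow (X : Fin n → E d) (x : E d) : BddBelow (depthSet X x) :=
  ⟨0, fun _ hr => depthSet_nonneg hr⟩

lemma sideCount_le (X : Fin n → E d) (u x : E d) : sideCount X u x ≤ n := by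
  have := Set.ncard_le_ncard (Set.subset_univ {i : Fin n | ⟪u, X i⟫ ≤ ⟪u, x⟫}) Set.finite_univ
  simpa [sideCount, Set.ncard_univ] using this

lemma depth_le {X : Fin n → E d} {x : E d} {u : E d} (hu : ‖u‖ = 1) :
    depth X x ≤ (sideCount X u x : ℝ) / (n : ℝ) :=
  csInf_le (depthSet_bddBelow X x) ⟨u, hu, rfl⟩

lemma le_depth {X : Fin n → E d} {x : E d} {b : ℝ} (hd : 1 ≤ d)
    (h : ∀ u : E d, ‖u‖ = 1 → b ≤ (sideCount X u x : ℝ) / (n : ℝ)) : b ≤ depth X x := by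
  obtain ⟨u, hu⟩ := exists_unit (d := d) hd
  exact le_csInf ⟨_, u, hu, rfl⟩ (fun r hr => by obtain ⟨v, hv, rfl⟩ := hr; exact h v hv)

lemma depth_le_one (hd : 1 ≤ d) (X : Fin n → E d) (x : E d) : depth X x ≤ 1 := by
  obtain ⟨u, hu⟩ := exists_unit (d := d) hd
  refine (depth_le hu).trans ?_
  rcases Nat.eq_zero_or_pos n with h | h
  · subst h; simp
  · rw [div_le_one (by positivity)]
    exact_mod_cast Nat.cast_le.mpr (sideCount_le X u x)

lemma depth_nonneg (X : Fin n → E d) (x : E d) : 0 ≤ depth X x :=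
  Real.sInf_nonneg (fun _ hr => depthSet_nonneg hr)

lemma bddAbove_range_depth (hd : 1 ≤ d) (X : Fin n → E d) :
    BddAbove (Set.range (depth X)) := by
  refine ⟨1, ?_⟩
  rintro r ⟨x, rfl⟩
  exact depth_le_one hd X x

lemma depth_le_maxDepth (hd : 1 ≤ d) (X : Fin n → E d) (x : E d) :
    depth X x ≤ maxDepth X :=
  le_csSup (bddAbove_range_depth hd X) ⟨x, rfl⟩

end Aux
section Centerpoint

open Module Finset

lemma ncard_setOf_eq_card_filter {N : ℕ} (P : Fin N → Prop) [DecidablePred P] :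
    ({i : Fin N | P i} : Set (Fin N)).ncard = #(Finset.univ.filter P) := by
  rw [Set.ncard_eq_toFinset_card']
  simp

lemma convexHull_subset_gt {d : ℕ} (u : E d) (c : ℝ) {S : Set (E d)}
    (hS : ∀ z ∈ S, c < ⟪u, z⟫) : convexHull ℝ S ⊆ {z : E d | c < ⟪u, z⟫} := by
  apply convexHull_min hS
  exact convex_halfSpace_gt ⟨fun a b => inner_add_right u a b, fun r a => real_inner_smul_right u a r⟩ c

/-- Multiset centerpoint theorem: if `(d+1)k < N` there is a point such that every
closed halfspace through it contains at least `k+1` of the `N` points. -/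
lemma centerpoint {d N k : ℕ} (Z : Fin N → E d) (hk : (d + 1) * k < N) :
    ∃ x : E d, ∀ u : E d, ‖u‖ = 1 →
      k + 1 ≤ ({i : Fin N | ⟪u, Z i⟫ ≤ ⟪u, x⟫} : Set (Fin N)).ncard := by
  classical
  set s : Finset (Finset (Fin N)) := Finset.univ.filter (fun I => #I = N - k) with hs
  have hfr : finrank ℝ (E d) = d := finrank_euclideanSpace_fin
  have hkN : k ≤ N := le_of_lt (lt_of_le_of_lt (Nat.le_mul_of_pos_left k (by omega)) hk)
  have hx : (⋂ I ∈ s, convexHull ℝ (Z '' (I : Set (Fin N)))).Nonempty := by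
    apply Convex.helly_theorem' (𝕜 := ℝ)
    · intro I _; exact convex_convexHull ℝ _
    · intro G hGs hGcard
      have hii : ∃ i : Fin N, ∀ I ∈ G, i ∈ I := by
        by_contra h
        push_neg at h
        have hcover : (Finset.univ : Finset (Fin N)) ⊆ G.biUnion (fun I => Iᶜ) := by
          intro i _
          obtain ⟨I, hIG, hiI⟩ := h i
          exact Finset.mem_biUnion.mpr ⟨I, hIG, Finset.mem_compl.mpr hiI⟩
        have hN : N ≤ #(G.biUnion (fun I => Iᶜ)) := by
          simpa using Finset.card_le_card hcover
        have hsum : #(G.biUnion (fun I => Iᶜ)) ≤ ∑ I ∈ G, #(Iᶜ) :=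
          Finset.card_biUnion_le
        have hcompl : ∀ I ∈ G, #(Iᶜ : Finset (Fin N)) = k := by
          intro I hIG
          have hIs : I ∈ s := hGs hIG
          have : #I = N - k := by
            simpa [hs] using (Finset.mem_filter.mp hIs).2
          rw [Finset.card_compl, this]
          simp only [Fintype.card_fin]
          omega
        have : ∑ I ∈ G, #(Iᶜ) = #G * k := by
          rw [Finset.sum_congr rfl hcompl]
          simp [Finset.sum_const, mul_comm]
        have hGle : #G ≤ d + 1 := by rw [hfr] at hGcard; exact hGcard
        nlinarith [hN, hsum]
      obtain ⟨i, hi⟩ := hii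
      exact ⟨Z i, Set.mem_biInter fun I hIG =>
        subset_convexHull ℝ _ ⟨i, by simpa using hi I hIG, rfl⟩⟩
  obtain ⟨x, hx⟩ := hx
  refine ⟨x, fun u hu => ?_⟩
  by_contra hlt
  push_neg at hlt
  rw [ncard_setOf_eq_card_filter] at hlt
  have hcardF : N - k ≤ #(Finset.univ.filter (fun i : Fin N => ¬ (⟪u, Z i⟫ ≤ ⟪u, x⟫))) := by
    have := Finset.card_filter_add_card_filter_not
      (s := (Finset.univ : Finset (Fin N))) (p := fun i : Fin N => ⟪u, Z i⟫ ≤ ⟪u, x⟫)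
    simp only [Finset.card_univ, Fintype.card_fin] at this
    omega
  obtain ⟨I, hIsub, hIcard⟩ := Finset.exists_subset_card_eq hcardF
  have hIs : I ∈ s := by simp [hs, hIcard]
  have hxI : x ∈ convexHull ℝ (Z '' (I : Set (Fin N))) := by
    exact Set.mem_iInter₂.mp hx I hIs
  have : x ∈ {z : E d | ⟪u, x⟫ < ⟪u, z⟫} := by
    refine convexHull_subset_gt u _ ?_ hxI
    rintro z ⟨i, hiI, rfl⟩
    have := hIsub (by simpa using hiI)
    simp only [Finset.mem_filter] at this
    linarith [not_le.mp this.2]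
  simp at this

end Centerpoint
section Average

open MeasureTheory

lemma norm_avg_le {d : ℕ} (μ : Measure (E d)) {K : Set (E d)} {R : ℝ} (hR : 0 ≤ R)
    (hK : K ⊆ Metric.closedBall 0 R) :
    ‖(μ K).toReal⁻¹ • ∫ x in K, x ∂μ‖ ≤ R := by
  by_cases hfin : μ K = ⊤
  · simp [hfin, hR]
  by_cases hint : Integrable (fun x : E d => x) (μ.restrict K)
  · have hfm : IsFiniteMeasure (μ.restrict K) :=
      ⟨by rwa [Measure.restrict_apply_univ, lt_top_iff_ne_top]⟩
    have hae : ∀ᵐ x ∂(μ.restrict K), ‖x‖ ≤ R := by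
      rw [ae_iff]
      have hmeas : MeasurableSet {x : E d | ¬ ‖x‖ ≤ R} := by
        have : {x : E d | ¬ ‖x‖ ≤ R} = (Metric.closedBall 0 R)ᶜ := by
          ext z; simp [Metric.mem_closedBall, dist_zero_right]
        rw [this]
        exact measurableSet_closedBall.compl
      rw [Measure.restrict_apply hmeas]
      have : {x : E d | ¬ ‖x‖ ≤ R} ∩ K = ∅ := by
        ext z
        simp only [Set.mem_inter_iff, Set.mem_setOf_eq, Set.mem_empty_iff_false, iff_false,
          not_and]
        intro hz hzK
        exact hz (by simpa [dist_zero_right] using Metric.mem_closedBall.mp (hK hzK))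
      rw [this]; simp
    have h1 : ‖∫ x in K, x ∂μ‖ ≤ ∫ x in K, ‖x‖ ∂μ := norm_integral_le_integral_norm _
    have h2 : ∫ x in K, ‖x‖ ∂μ ≤ ∫ _x in K, R ∂μ :=
      integral_mono_ae hint.norm (integrable_const R) hae
    have h3 : ∫ _x in K, R ∂μ = (μ K).toReal * R := by
      rw [integral_const, measureReal_restrict_apply_univ, smul_eq_mul, measureReal_def]
    have hc : 0 ≤ (μ K).toReal := ENNReal.toReal_nonneg
    rw [norm_smul, Real.norm_eq_abs, abs_inv, abs_of_nonneg hc]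
    rcases eq_or_lt_of_le hc with h0 | h0
    · rw [← h0]; simpa using hR
    · calc (μ K).toReal⁻¹ * ‖∫ x in K, x ∂μ‖
          ≤ (μ K).toReal⁻¹ * ((μ K).toReal * R) := by
            apply mul_le_mul_of_nonneg_left _ (inv_nonneg.mpr hc)
            exact h1.trans (h2.trans_eq h3)
        _ = R := by field_simp
  · rw [integral_undef hint]
    simpa using hR

end Average
section NoBreak

open MeasureTheory

lemma ncard_range_natAdd (n m : ℕ) :
    (Set.range (Fin.natAdd n : Fin m → Fin (n + m))).ncard = m := by
  rw [← Nat.card_coe_set_eq, Nat.card_range_of_injective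
    (fun a b h => by simpa [Fin.ext_iff] using h)]
  simp

lemma append_cases {n m : ℕ} {α : Type*} (X : Fin n → α) (Y : Fin m → α)
    (i : Fin (n + m)) :
    (∃ j : Fin n, Fin.append X Y i = X j) ∨
      i ∈ Set.range (Fin.natAdd n : Fin m → Fin (n + m)) := by
  by_cases h : (i : ℕ) < n
  · left
    refine ⟨⟨i, h⟩, ?_⟩
    have h2 := Fin.append_left X Y ⟨i, h⟩
    have h3 : Fin.castAdd m ⟨i, h⟩ = i := by simp [Fin.ext_iff]
    rwa [h3] at h2
  · right
    exact ⟨⟨(i : ℕ) - n, by omega⟩, by simp [Fin.ext_iff]; omega⟩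

/-- Any point beyond the radius of the original sample has contaminated depth
at most `m / (n+m)`. -/
lemma depth_far_le {d n m : ℕ} (X : Fin n → E d) (Y : Fin m → E d) {R : ℝ} (hR : 0 ≤ R)
    (hRX : ∀ j, ‖X j‖ < R) {x : E d} (hx : R < ‖x‖) :
    depth (Fin.append X Y) x ≤ (m : ℝ) / ((n + m : ℕ) : ℝ) := by
  have hx0 : ‖x‖ ≠ 0 := ne_of_gt (lt_of_le_of_lt hR hx)
  set u : E d := -(‖x‖⁻¹ • x) with hu_def
  have hu : ‖u‖ = 1 := by
    rw [hu_def, norm_neg, norm_smul, norm_inv, norm_norm, inv_mul_cancel₀ hx0]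
  have hux : ⟪u, x⟫ = -‖x‖ := by
    rw [hu_def, inner_neg_left, real_inner_smul_left, real_inner_self_eq_norm_mul_norm]
    field_simp
  have hsub : {i : Fin (n + m) | ⟪u, Fin.append X Y i⟫ ≤ ⟪u, x⟫} ⊆
      Set.range (Fin.natAdd n : Fin m → Fin (n + m)) := by
    intro i hi
    rcases append_cases X Y i with ⟨j, hj⟩ | hmem
    · exfalso
      rw [Set.mem_setOf_eq, hj, hux] at hi
      have h1 : ⟪u, X j⟫ = -(‖x‖⁻¹ * ⟪x, X j⟫) := by
        rw [hu_def, inner_neg_left, real_inner_smul_left]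
      have h2 : ⟪x, X j⟫ ≤ ‖x‖ * ‖X j‖ := real_inner_le_norm x (X j)
      have h3 : (0:ℝ) < ‖x‖ := lt_of_le_of_lt hR hx
      have h4 : -‖X j‖ ≤ -(‖x‖⁻¹ * ⟪x, X j⟫) := by
        have h5 := mul_le_mul_of_nonneg_left h2 (inv_nonneg.mpr h3.le)
        rw [← mul_assoc, inv_mul_cancel₀ hx0, one_mul] at h5
        linarith
      rw [h1] at hi
      have h6 := hRX j
      linarith
    · exact hmem
  have hcard : sideCount (Fin.append X Y) u x ≤ m := by
    calc sideCount (Fin.append X Y) u x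
        ≤ (Set.range (Fin.natAdd n : Fin m → Fin (n + m))).ncard :=
          Set.ncard_le_ncard hsub (Set.toFinite _)
      _ = m := ncard_range_natAdd n m
  refine (depth_le hu).trans ?_
  gcongr

/-- The contaminated sample always has a point of depth at least `(m+1)/(n+m)`,
provided `d * m < n`. -/
lemma maxDepth_ge_of_lt {d n m : ℕ} (hd : 1 ≤ d) (X : Fin n → E d) (Y : Fin m → E d)
    (hm : d * m < n) :
    ((m : ℝ) + 1) / ((n + m : ℕ) : ℝ) ≤ maxDepth (Fin.append X Y) := by
  obtain ⟨x, hx⟩ := centerpoint (Fin.append X Y) (k := m) (by rw [Nat.succ_mul]; omega)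
  refine le_trans ?_ (depth_le_maxDepth hd _ x)
  apply le_depth hd
  intro u hu
  have h1 : (m + 1 : ℕ) ≤ sideCount (Fin.append X Y) u x := hx u hu
  gcongr
  exact_mod_cast h1

lemma not_breaksDown {d n m : ℕ} (hd : 2 ≤ d) (X : Fin n → E d)
    (hm : d * m < n) : ¬ breaksDown X m := by
  have hd1 : 1 ≤ d := by omega
  set R : ℝ := 1 + ∑ j, ‖X j‖ with hR_def
  have hR0 : 0 ≤ R := by positivity
  have hRX : ∀ j, ‖X j‖ < R := fun j => by
    have h1 : ‖X j‖ ≤ ∑ i, ‖X i‖ :=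
      Finset.single_le_sum (f := fun i => ‖X i‖) (fun i _ => norm_nonneg _) (Finset.mem_univ j)
    have : (0:ℝ) < 1 := one_pos
    rw [hR_def]; linarith
  intro hb
  obtain ⟨Y, hY⟩ := hb (R + ‖TukeyMedian X‖)
  have hMK : MSet (Fin.append X Y) ⊆ Metric.closedBall 0 R := by
    intro x hxM
    rw [Metric.mem_closedBall, dist_zero_right]
    by_contra hfar
    push_neg at hfar
    have h1 := depth_far_le X Y hR0 hRX hfar
    have h2 := maxDepth_ge_of_lt hd1 X Y hm
    have hxd : depth (Fin.append X Y) x = maxDepth (Fin.append X Y) := hxM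
    have hN : (0:ℝ) < ((n + m : ℕ) : ℝ) := by
      have : 0 < n + m := by omega
      exact_mod_cast this
    rw [hxd] at h1
    have h3 : ((m:ℝ) + 1) / ((n + m : ℕ) : ℝ) ≤ (m:ℝ) / ((n + m : ℕ) : ℝ) := le_trans h2 h1
    rw [div_le_div_iff₀ hN hN] at h3
    nlinarith
  have hTb : ‖TukeyMedian (Fin.append X Y)‖ ≤ R := by
    unfold TukeyMedian setAverage
    exact norm_avg_le _ hR0 hMK
  have h4 := norm_sub_le (TukeyMedian (Fin.append X Y)) (TukeyMedian X)
  linarith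

end NoBreak
section ExistsBreak

open MeasureTheory

lemma setAverage_singleton {d : ℕ} (y : E d) : setAverage ({y} : Set (E d)) = y := by
  have hdir : ((Module.finrank ℝ (affineSpan ℝ ({y} : Set (E d))).direction : ℕ) : ℝ) = 0 := by
    rw [direction_affineSpan, vectorSpan_singleton, finrank_bot]
    norm_num
  unfold setAverage
  rw [hdir, MeasureTheory.Measure.hausdorffMeasure_zero_singleton,
    Measure.restrict_singleton, integral_smul_measure, integral_dirac,
    MeasureTheory.Measure.hausdorffMeasure_zero_singleton]
  simp

lemma ncard_range_castAdd (n m : ℕ) :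
    (Set.range (Fin.castAdd m : Fin n → Fin (n + m))).ncard = n := by
  rw [← Nat.card_coe_set_eq, Nat.card_range_of_injective
    (fun a b h => by simpa [Fin.ext_iff] using h)]
  simp

lemma append_cases_left {n m : ℕ} {α : Type*} (X : Fin n → α) (Y : Fin m → α)
    (i : Fin (n + m)) :
    i ∈ Set.range (Fin.castAdd m : Fin n → Fin (n + m)) ∨
      (∃ j : Fin m, Fin.append X Y i = Y j) := by
  by_cases h : (i : ℕ) < n
  · exact Or.inl ⟨⟨i, h⟩, by simp [Fin.ext_iff]⟩
  · right
    refine ⟨⟨(i : ℕ) - n, by omega⟩, ?_⟩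
    have h2 := Fin.append_right X Y ⟨(i : ℕ) - n, by omega⟩
    have h3 : Fin.natAdd n ⟨(i : ℕ) - n, by omega⟩ = i := by
      simp [Fin.ext_iff]; omega
    rwa [h3] at h2

lemma depth_ne_cluster {d n m : ℕ} (X : Fin n → E d) (y : E d) {x : E d} (hxy : x ≠ y) :
    depth (Fin.append X (fun _ : Fin m => y)) x ≤ (n : ℝ) / ((n + m : ℕ) : ℝ) := by
  have hyx : y - x ≠ 0 := sub_ne_zero.mpr (Ne.symm hxy)
  have hnorm : ‖y - x‖ ≠ 0 := norm_ne_zero_iff.mpr hyx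
  set u : E d := ‖y - x‖⁻¹ • (y - x) with hu_def
  have hu : ‖u‖ = 1 := by
    rw [hu_def, norm_smul, norm_inv, norm_norm, inv_mul_cancel₀ hnorm]
  have hlt : ⟪u, x⟫ < ⟪u, y⟫ := by
    have h1 : ⟪u, y⟫ - ⟪u, x⟫ = ‖y - x‖ := by
      rw [← inner_sub_right, hu_def, real_inner_smul_left,
        real_inner_self_eq_norm_mul_norm]
      field_simp
    have h2 : (0:ℝ) < ‖y - x‖ := lt_of_le_of_ne (norm_nonneg _) (Ne.symm hnorm)
    linarith
  have hsub : {i : Fin (n + m) | ⟪u, Fin.append X (fun _ => y) i⟫ ≤ ⟪u, x⟫} ⊆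
      Set.range (Fin.castAdd m : Fin n → Fin (n + m)) := by
    intro i hi
    rcases append_cases_left X (fun _ => y) i with hmem | ⟨j, hj⟩
    · exact hmem
    · exfalso
      rw [Set.mem_setOf_eq, hj] at hi
      exact absurd hi (not_le.mpr hlt)
  have hcard : sideCount (Fin.append X (fun _ : Fin m => y)) u x ≤ n := by
    calc sideCount (Fin.append X (fun _ : Fin m => y)) u x
        ≤ (Set.range (Fin.castAdd m : Fin n → Fin (n + m))).ncard :=
          Set.ncard_le_ncard hsub (Set.toFinite _)
      _ = n := ncard_range_castAdd n m
  refine (depth_le hu).trans ?_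
  gcongr

lemma depth_cluster_ge {d n m : ℕ} (hd : 1 ≤ d) (X : Fin n → E d) (y : E d) :
    ((m : ℕ) : ℝ) / ((n + m : ℕ) : ℝ) ≤ depth (Fin.append X (fun _ : Fin m => y)) y := by
  apply le_depth hd
  intro u hu
  have hsub : Set.range (Fin.natAdd n : Fin m → Fin (n + m)) ⊆
      {i : Fin (n + m) | ⟪u, Fin.append X (fun _ => y) i⟫ ≤ ⟪u, y⟫} := by
    rintro i ⟨j, rfl⟩
    simp [Fin.append_right]
  have hcard : m ≤ sideCount (Fin.append X (fun _ : Fin m => y)) u y := by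
    calc m = (Set.range (Fin.natAdd n : Fin m → Fin (n + m))).ncard :=
          (ncard_range_natAdd n m).symm
      _ ≤ sideCount (Fin.append X (fun _ : Fin m => y)) u y :=
          Set.ncard_le_ncard hsub (Set.toFinite _)
  gcongr

lemma breaksDown_exists {d n : ℕ} (hd : 2 ≤ d) (X : Fin n → E d) :
    breaksDown X (n + 1) := by
  have hd1 : 1 ≤ d := by omega
  intro C
  obtain ⟨e, he⟩ := exists_unit (d := d) hd1
  set y : E d := TukeyMedian X + (|C| + 1) • e with hy_def
  refine ⟨fun _ => y, ?_⟩
  set Z : Fin (n + (n + 1)) → E d := Fin.append X (fun _ : Fin (n + 1) => y) with hZ_def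
  have hN : (0:ℝ) < ((n + (n + 1) : ℕ) : ℝ) := by
    have : 0 < n + (n + 1) := by omega
    exact_mod_cast this
  have h_y : ((n + 1 : ℕ) : ℝ) / ((n + (n + 1) : ℕ) : ℝ) ≤ depth Z y :=
    depth_cluster_ge hd1 X y
  have h_other : ∀ x : E d, x ≠ y →
      depth Z x ≤ ((n : ℕ) : ℝ) / ((n + (n + 1) : ℕ) : ℝ) := fun x hxy =>
    depth_ne_cluster X y hxy
  have hlt : ((n : ℕ) : ℝ) / ((n + (n + 1) : ℕ) : ℝ)
      < ((n + 1 : ℕ) : ℝ) / ((n + (n + 1) : ℕ) : ℝ) := by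
    have hnum : ((n : ℕ) : ℝ) < ((n + 1 : ℕ) : ℝ) := by exact_mod_cast Nat.lt_succ_self n
    exact div_lt_div_of_pos_right hnum hN
  have hmax : maxDepth Z = depth Z y := by
    apply le_antisymm
    · apply csSup_le (Set.range_nonempty _)
      rintro r ⟨x, rfl⟩
      by_cases hxy : x = y
      · rw [hxy]
      · exact (h_other x hxy).trans (le_of_lt (lt_of_lt_of_le hlt h_y))
    · exact depth_le_maxDepth hd1 Z y
  have hMS : MSet Z = {y} := by
    ext x
    simp only [MSet, Set.mem_setOf_eq, Set.mem_singleton_iff]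
    constructor
    · intro hx
      by_contra hxy
      rw [hmax] at hx
      have := (h_other x hxy).trans_lt (lt_of_lt_of_le hlt h_y)
      exact absurd hx (ne_of_lt this)
    · intro hx
      rw [hx, hmax]
  have hTM : TukeyMedian Z = y := by
    unfold TukeyMedian
    rw [hMS, setAverage_singleton]
  rw [hTM, hy_def]
  have : TukeyMedian X + (|C| + 1) • e - TukeyMedian X = (|C| + 1) • e := by abel
  rw [this, norm_smul, he, mul_one, Real.norm_eq_abs, abs_of_nonneg (by positivity)]
  linarith [le_abs_self C, abs_nonneg C]
end ExistsBreak
/-- **Proposition 1, lower bound.** If `X` is in general position in `ℝ^d`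
(`d ≥ 2`), then `ε(T*, Xⁿ) ≥ ⌈n/d⌉ / (n + ⌈n/d⌉)`. -/
theorem proposition1_lower {d n : ℕ} (hd : 2 ≤ d) (X : Fin n → E d)
    (hX : inGeneralPosition X) :
    ((⌈(n : ℝ) / (d : ℝ)⌉ : ℝ)) / ((n : ℝ) + (⌈(n : ℝ) / (d : ℝ)⌉ : ℝ)) ≤ FSBP X := by
  have hd0 : (0:ℝ) < (d:ℝ) := by exact_mod_cast (by omega : 0 < d)
  rcases Nat.eq_zero_or_pos n with hn | hn
  · have h0 : ⌈(n : ℝ) / (d : ℝ)⌉ = 0 := by rw [hn]; simp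
    rw [h0]
    simp only [Int.cast_zero, zero_div]
    apply Real.sInf_nonneg
    rintro r ⟨m, hm1, hbd, rfl⟩
    positivity
  · have hn' : (0:ℝ) < (n:ℝ) := by exact_mod_cast hn
    have hc1 : (0:ℤ) < ⌈(n : ℝ) / (d : ℝ)⌉ := Int.ceil_pos.mpr (by positivity)
    have hc0 : (0:ℝ) ≤ ((⌈(n : ℝ) / (d : ℝ)⌉ : ℤ) : ℝ) := by exact_mod_cast hc1.le
    apply le_csInf
    · exact ⟨((n + 1 : ℕ) : ℝ) / ((n : ℝ) + ((n + 1 : ℕ) : ℝ)),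
        ⟨n + 1, by omega, breaksDown_exists hd X, rfl⟩⟩
    · rintro r ⟨m, hm1, hbd, rfl⟩
      have hdm : ¬ (d * m < n) := fun h => not_breaksDown hd X h hbd
      push_neg at hdm
      have hcm : ((⌈(n : ℝ) / (d : ℝ)⌉ : ℤ) : ℝ) ≤ (m : ℝ) := by
        have h3 : (n : ℝ) ≤ (d : ℝ) * (m : ℝ) := by exact_mod_cast hdm
        have h4 : (⌈(n : ℝ) / (d : ℝ)⌉ : ℤ) ≤ (m : ℤ) := Int.ceil_le.mpr (by
          rw [div_le_iff₀ hd0]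
          push_cast
          linarith)
        exact_mod_cast h4
      have h1 : (0:ℝ) < (n : ℝ) + ((⌈(n : ℝ) / (d : ℝ)⌉ : ℤ) : ℝ) := by linarith
      have h2 : (0:ℝ) < (n : ℝ) + (m : ℝ) := by
        have : (0:ℝ) ≤ (m : ℝ) := Nat.cast_nonneg m
        linarith
      rw [div_le_div_iff₀ h1 h2]
      nlinarith [mul_le_mul_of_nonneg_right hcm hn'.le]
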